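/- Let $g_n, g_f, g_p$ be independent: $g_u$ Gamma with integer shape $N_u \geq 1$ and scale $\Omega_u > 0$ ($u \in \{n,f\}$), $g_p$ exponential with mean $\Omega_p > 0$. Let $I, P_{\mathrm{peak}}, \xi_n, \xi_f > 0$. Then $\Pr\left(\frac{g_n}{g_p} \geq \frac{\xi_n}{I},\ \frac{g_f}{g_p} \geq \frac{\xi_f}{I},\ g_p > \frac{I}{P_{\mathrm{peak}}}\right) = \frac{1}{\Omega_p}\sum_{k=0}^{N_f-1}\sum_{l=0}^{N_n-1}\frac{\xi_n^l \xi_f^k}{k!\,l!\,\Omega_n^l\,\Omega_f^k\,I^{k+l}}\,\Gamma\left[k+l+1,\left(\frac{1}{\Omega_p}+\frac{\xi_n}{\Omega_n I}+\frac{\xi_f}{\Omega_f I}\right)\frac{I}{P_{\mathrm{peak}}}\right]\left(\frac{1}{\Omega_p}+\frac{\xi_n}{\Omega_n I}+\frac{\xi_f}{\Omega_f I}\right)^{-(k+l+1)}$. -/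

import Mathlib

open MeasureTheory ProbabilityTheory Real
open Set Filter Topology

namespace PowX2Aux

noncomputable def tailF (l : ℝ) (N : ℕ) (x : ℝ) : ℝ :=
  Real.exp (-(l * x)) * ∑ j ∈ Finset.range N, (l * x) ^ j / (Nat.factorial j)

lemma tailF_nonneg {l x : ℝ} (hl : 0 ≤ l) (hx : 0 ≤ x) (N : ℕ) : 0 ≤ tailF l N x := by
  unfold tailF
  have h1 : 0 ≤ l * x := mul_nonneg hl hx
  refine mul_nonneg (Real.exp_pos _).le (Finset.sum_nonneg fun j _ => ?_)
  positivity

lemma tailF_continuous (l : ℝ) (N : ℕ) : Continuous (tailF l N) := by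
  unfold tailF
  refine Continuous.mul ?_ ?_
  · exact Real.continuous_exp.comp ((continuous_const.mul continuous_id).neg)
  · exact continuous_finset_sum _ fun j _ =>
      (((continuous_const.mul continuous_id).pow j).div_const _)

lemma tailF_hasDerivAt (l : ℝ) (m : ℕ) (x : ℝ) :
    HasDerivAt (tailF l (m + 1))
      (-(l ^ (m + 1) * x ^ m / (Nat.factorial m) * Real.exp (-(l * x)))) x := by
  induction m with
  | zero =>
    have h : tailF l 1 = fun y => Real.exp (-(l * y)) := by
      funext y; simp [tailF]
    rw [h]
    have h2 := (((hasDerivAt_id x).const_mul l).neg).exp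
    convert h2 using 1
    simp
    ring_nf
    rfl
  | succ m ih =>
    have h : tailF l (m + 2) = fun y => tailF l (m + 1) y
        + (l ^ (m + 1) / (Nat.factorial (m + 1))) * (y ^ (m + 1) * Real.exp (-(l * y))) := by
      funext y
      simp only [tailF, Finset.sum_range_succ, mul_add]
      rw [mul_pow]
      ring
    rw [h]
    have h1 : HasDerivAt (fun y : ℝ => y ^ (m + 1) * Real.exp (-(l * y)))
        (((m : ℝ) + 1) * x ^ m * Real.exp (-(l * x))
          + x ^ (m + 1) * (Real.exp (-(l * x)) * -l)) x := by
      have hp := hasDerivAt_pow (m + 1) x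
      have he := (((hasDerivAt_id x).const_mul l).neg).exp
      have := hp.mul he
      refine this.congr_deriv ?_
      change _ * x ^ (m + 1 - 1) * rexp (-(l * x)) + x ^ (m + 1) * (rexp (-(l * x)) * -(l * 1)) = _
      push_cast
      ring_nf
    have h2 := ih.add (h1.const_mul (l ^ (m + 1) / (Nat.factorial (m + 1))))
    refine h2.congr_deriv ?_
    have hf : (Nat.factorial (m + 1) : ℝ) = ((m : ℝ) + 1) * Nat.factorial m := by
      rw [Nat.factorial_succ]; push_cast; ring
    have hm0 : (Nat.factorial m : ℝ) ≠ 0 := Nat.cast_ne_zero.mpr (Nat.factorial_ne_zero m)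
    rw [hf]
    field_simp
    ring

lemma tailF_tendsto (l : ℝ) (hl : 0 < l) (N : ℕ) :
    Tendsto (tailF l N) atTop (𝓝 0) := by
  have key : ∀ j : ℕ, Tendsto (fun x : ℝ => (l * x) ^ j / (Nat.factorial j) * Real.exp (-(l * x)))
      atTop (𝓝 0) := by
    intro j
    have h1 : Tendsto (fun x : ℝ => l * x) atTop atTop :=
      Tendsto.const_mul_atTop hl tendsto_id
    have h2 := (tendsto_pow_mul_exp_neg_atTop_nhds_zero j).comp h1
    have h3 := h2.div_const (Nat.factorial j : ℝ)
    simp only [Function.comp_def] at h2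
    have h4 : (fun x : ℝ => (l * x) ^ j / (Nat.factorial j) * Real.exp (-(l * x)))
        = fun x : ℝ => ((l * x) ^ j * Real.exp (-(l * x))) / (Nat.factorial j) := by
      funext x; ring
    rw [h4]
    simpa using h3
  have hsum := tendsto_finset_sum (Finset.range N) (fun j _ => key j)
  simp only [Finset.sum_const_zero] at hsum
  refine hsum.congr fun x => ?_
  unfold tailF
  rw [← Finset.sum_mul, mul_comm]

lemma integral_tail (l : ℝ) (hl : 0 < l) (m : ℕ) {t : ℝ} (ht : 0 ≤ t) :
    (∫ x in Ioi t, l ^ (m + 1) * x ^ m / (Nat.factorial m) * Real.exp (-(l * x)))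
      = tailF l (m + 1) t ∧
    IntegrableOn (fun x => l ^ (m + 1) * x ^ m / (Nat.factorial m) * Real.exp (-(l * x)))
      (Ioi t) := by
  have hderiv : ∀ x ∈ Ici t, HasDerivAt (fun y => -tailF l (m + 1) y)
      (l ^ (m + 1) * x ^ m / (Nat.factorial m) * Real.exp (-(l * x))) x := by
    intro x _
    exact (tailF_hasDerivAt l m x).neg.congr_deriv (by ring)
  have hpos : ∀ x ∈ Ioi t, 0 ≤ l ^ (m + 1) * x ^ m / (Nat.factorial m) * Real.exp (-(l * x)) := by
    intro x hx
    have hx0 : 0 ≤ x := le_trans ht (le_of_lt hx)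
    positivity
  have hlim : Tendsto (fun y => -tailF l (m + 1) y) atTop (𝓝 0) := by
    simpa using (tailF_tendsto l hl (m + 1)).neg
  constructor
  · have h := integral_Ioi_of_hasDerivAt_of_nonneg' hderiv hpos hlim
    simpa using h
  · exact integrableOn_Ioi_deriv_of_nonneg' hderiv hpos hlim

lemma integrable_pow_exp (β : ℝ) (hβ : 0 < β) (n : ℕ) {t : ℝ} (ht : 0 ≤ t) :
    IntegrableOn (fun x => x ^ n * Real.exp (-(β * x))) (Ioi t) := by
  have h := (integral_tail β hβ n ht).2
  have h2 : (fun x => ((Nat.factorial n : ℝ) / β ^ (n + 1))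
      * (β ^ (n + 1) * x ^ n / (Nat.factorial n) * Real.exp (-(β * x))))
      = fun x => x ^ n * Real.exp (-(β * x)) := by
    funext x
    have hn0 : (Nat.factorial n : ℝ) ≠ 0 := Nat.cast_ne_zero.mpr (Nat.factorial_ne_zero n)
    have hb0 : β ^ (n + 1) ≠ 0 := pow_ne_zero _ hβ.ne'
    field_simp
  rw [← h2]
  exact h.const_mul _

lemma integral_pow_exp (β : ℝ) (hβ : 0 < β) (n : ℕ) (c : ℝ) :
    ∫ z in Ioi c, z ^ n * Real.exp (-(β * z))
      = (β ^ (n + 1))⁻¹ * ∫ t in Ioi (β * c), t ^ n * Real.exp (-t) := by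
  have h := integral_comp_mul_left_Ioi (fun t => t ^ n * Real.exp (-t)) c hβ
  simp only [smul_eq_mul] at h
  have h2 : ∫ x in Ioi c, (β * x) ^ n * Real.exp (-(β * x))
      = β ^ n * ∫ x in Ioi c, x ^ n * Real.exp (-(β * x)) := by
    rw [← integral_const_mul]
    congr 1
    funext x
    rw [mul_pow]; ring
  rw [h2] at h
  have hb : (β : ℝ) ^ n ≠ 0 := pow_ne_zero _ hβ.ne'
  field_simp at h ⊢
  rw [pow_succ]
  nlinarith [h]

lemma gammaMeasure_Ici (r : ℝ) (hr : 0 < r) (m : ℕ) {s : ℝ} (hs : 0 ≤ s) :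
    gammaMeasure ((m + 1 : ℕ) : ℝ) r (Ici s) = ENNReal.ofReal (tailF r (m + 1) s) := by
  rw [gammaMeasure, withDensity_apply _ measurableSet_Ici]
  have h1 : ∫⁻ x in Ici s, gammaPDF ((m + 1 : ℕ) : ℝ) r x
      = ∫⁻ x in Ioi s, gammaPDF ((m + 1 : ℕ) : ℝ) r x :=
    (setLIntegral_congr Ioi_ae_eq_Ici).symm
  rw [h1]
  have h2 : ∫⁻ x in Ioi s, gammaPDF ((m + 1 : ℕ) : ℝ) r x
      = ∫⁻ x in Ioi s,
          ENNReal.ofReal (r ^ (m + 1) * x ^ m / (Nat.factorial m) * Real.exp (-(r * x))) := by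
    refine setLIntegral_congr_fun measurableSet_Ioi (fun x hx => ?_)
    have hx0 : 0 ≤ x := le_trans hs (le_of_lt hx)
    rw [gammaPDF_of_nonneg hx0]
    congr 1
    have e1 : r ^ (((m + 1 : ℕ) : ℝ)) = r ^ (m + 1 : ℕ) := rpow_natCast r (m + 1)
    have e2 : ((m + 1 : ℕ) : ℝ) - 1 = (m : ℝ) := by push_cast; ring
    have e3 : x ^ ((m : ℝ)) = x ^ (m : ℕ) := rpow_natCast x m
    have e4 : Real.Gamma ((m + 1 : ℕ) : ℝ) = (Nat.factorial m : ℝ) := by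
      push_cast
      exact Real.Gamma_nat_eq_factorial m
    rw [e2, e1, e3, e4]
    ring
  rw [h2]
  rw [← ofReal_integral_eq_lintegral_ofReal ((integral_tail r hr m hs).2)
      ((ae_restrict_iff' measurableSet_Ioi).mpr (ae_of_all _ fun x hx => by
        have hx0 : 0 ≤ x := le_trans hs (le_of_lt hx)
        positivity))]
  rw [(integral_tail r hr m hs).1]

end PowX2Aux


open PowX2Aux

/-- The interference-limited contribution `𝔛₂` in the PowIntICSI outage probability:
`Pr(g_n/g_p ≥ ξn/I, g_f/g_p ≥ ξf/I, g_p > I/P_peak)` equals the stated double sum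
involving upper incomplete Gamma functions. -/
theorem powinticsi_X2 {Ωs : Type*} [MeasureSpace Ωs]
    [IsProbabilityMeasure (ℙ : Measure Ωs)]
    (gn gf gp : Ωs → ℝ) (hmn : Measurable gn) (hmf : Measurable gf) (hmp : Measurable gp)
    (Nn Nf : ℕ) (hNn : 1 ≤ Nn) (hNf : 1 ≤ Nf)
    (Ωn Ωf Ωp : ℝ) (hΩn : 0 < Ωn) (hΩf : 0 < Ωf) (hΩp : 0 < Ωp)
    (hgn : Measure.map gn ℙ = gammaMeasure Nn Ωn⁻¹)
    (hgf : Measure.map gf ℙ = gammaMeasure Nf Ωf⁻¹)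
    (hgp : Measure.map gp ℙ = expMeasure Ωp⁻¹)
    (hind : iIndepFun ![gn, gf, gp] ℙ)
    (I Ppeak ξn ξf : ℝ) (hI : 0 < I) (hP : 0 < Ppeak) (hξn : 0 < ξn) (hξf : 0 < ξf) :
    (ℙ {ω | ξn / I ≤ gn ω / gp ω ∧ ξf / I ≤ gf ω / gp ω ∧ I / Ppeak < gp ω}).toReal
      = (1 / Ωp) * ∑ k ∈ Finset.range Nf, ∑ l ∈ Finset.range Nn,
          ξn ^ l * ξf ^ k
            / (Nat.factorial k * Nat.factorial l * Ωn ^ l * Ωf ^ k * I ^ (k + l))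
          * (∫ t in Set.Ioi ((1 / Ωp + ξn / (Ωn * I) + ξf / (Ωf * I)) * (I / Ppeak)),
              t ^ (k + l) * Real.exp (-t))
          / (1 / Ωp + ξn / (Ωn * I) + ξf / (Ωf * I)) ^ (k + l + 1) := by
  obtain ⟨mn, rfl⟩ : ∃ m, Nn = m + 1 := ⟨Nn - 1, (Nat.succ_pred_eq_of_pos hNn).symm⟩
  obtain ⟨mf, rfl⟩ : ∃ m, Nf = m + 1 := ⟨Nf - 1, (Nat.succ_pred_eq_of_pos hNf).symm⟩
  set c : ℝ := I / Ppeak with hc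
  set β : ℝ := 1 / Ωp + ξn / (Ωn * I) + ξf / (Ωf * I) with hβ
  set a : ℝ := ξn / I with ha
  set b : ℝ := ξf / I with hb
  have hapos : 0 < a := div_pos hξn hI
  have hbpos : 0 < b := div_pos hξf hI
  have hcpos : 0 < c := div_pos hI hP
  have hβpos : 0 < β := by
    rw [hβ]; positivity
  haveI ipn : IsProbabilityMeasure (gammaMeasure ((mn + 1 : ℕ) : ℝ) Ωn⁻¹) :=
    isProbabilityMeasure_gammaMeasure (by positivity) (by positivity)
  haveI ipf : IsProbabilityMeasure (gammaMeasure ((mf + 1 : ℕ) : ℝ) Ωf⁻¹) :=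
    isProbabilityMeasure_gammaMeasure (by positivity) (by positivity)
  set S : Set (ℝ × ℝ × ℝ) := {p | c < p.1 ∧ a * p.1 ≤ p.2.1 ∧ b * p.1 ≤ p.2.2} with hS
  have hSm : MeasurableSet S := by
    have hrw : S = {p : ℝ × ℝ × ℝ | c < p.1} ∩
        ({p : ℝ × ℝ × ℝ | a * p.1 ≤ p.2.1} ∩ {p : ℝ × ℝ × ℝ | b * p.1 ≤ p.2.2}) := by
      ext p; simp [hS, and_assoc]
    rw [hrw]
    exact (measurableSet_lt measurable_const measurable_fst).inter
      ((measurableSet_le (measurable_fst.const_mul a) measurable_snd.fst).inter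
        (measurableSet_le (measurable_fst.const_mul b) measurable_snd.snd))
  -- Step 1: rewrite the event as a preimage
  have hset : {ω | ξn / I ≤ gn ω / gp ω ∧ ξf / I ≤ gf ω / gp ω ∧ I / Ppeak < gp ω}
      = (fun ω => (gp ω, (gn ω, gf ω))) ⁻¹' S := by
    ext ω
    simp only [hS, mem_setOf_eq, mem_preimage]
    constructor
    · rintro ⟨h1, h2, h3⟩
      have hz : 0 < gp ω := lt_trans hcpos h3
      exact ⟨h3, (le_div_iff₀ hz).mp h1, (le_div_iff₀ hz).mp h2⟩
    · rintro ⟨h3, h1, h2⟩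
      have hz : 0 < gp ω := lt_trans hcpos h3
      exact ⟨(le_div_iff₀ hz).mpr h1, (le_div_iff₀ hz).mpr h2, h3⟩
  -- Step 2: independence and joint law
  have hm : ∀ i, Measurable (![gn, gf, gp] i) := by
    intro i; fin_cases i <;> assumption
  have hIndnf : IndepFun gn gf ℙ := by
    have h := hind.indepFun (show (0 : Fin 3) ≠ 1 by decide)
    simpa using h
  have hIndp : IndepFun gp (fun ω => (gn ω, gf ω)) ℙ := by
    have h := (hind.indepFun_prodMk hm 0 1 2 (by decide) (by decide)).symm
    simpa using h
  have hmap2 : Measure.map (fun ω => (gn ω, gf ω)) ℙ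
      = (gammaMeasure ((mn + 1 : ℕ) : ℝ) Ωn⁻¹).prod (gammaMeasure ((mf + 1 : ℕ) : ℝ) Ωf⁻¹) := by
    rw [← hgn, ← hgf]
    exact (indepFun_iff_map_prod_eq_prod_map_map hmn.aemeasurable hmf.aemeasurable).mp hIndnf
  have hmapT : Measure.map (fun ω => (gp ω, (gn ω, gf ω))) ℙ
      = (expMeasure Ωp⁻¹).prod
          ((gammaMeasure ((mn + 1 : ℕ) : ℝ) Ωn⁻¹).prod (gammaMeasure ((mf + 1 : ℕ) : ℝ) Ωf⁻¹)) := by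
    rw [← hgp, ← hmap2]
    exact (indepFun_iff_map_prod_eq_prod_map_map hmp.aemeasurable
      (hmn.prodMk hmf).aemeasurable).mp hIndp
  rw [hset, ← Measure.map_apply (hmp.prodMk (hmn.prodMk hmf)) hSm, hmapT,
    Measure.prod_apply hSm]
  -- Step 3: slice the product measure
  have hslice : (∫⁻ z, ((gammaMeasure ((mn + 1 : ℕ) : ℝ) Ωn⁻¹).prod
        (gammaMeasure ((mf + 1 : ℕ) : ℝ) Ωf⁻¹)) (Prod.mk z ⁻¹' S) ∂(expMeasure Ωp⁻¹))
      = ∫⁻ z in Ioi c, ENNReal.ofReal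
          (tailF Ωn⁻¹ (mn + 1) (a * z) * tailF Ωf⁻¹ (mf + 1) (b * z)) ∂(expMeasure Ωp⁻¹) := by
    rw [← lintegral_indicator measurableSet_Ioi]
    apply lintegral_congr
    intro z
    by_cases hz : z ∈ Ioi c
    · have hz' : c < z := hz
      have hz0 : 0 < z := lt_trans hcpos hz'
      have hpre : Prod.mk z ⁻¹' S = Ici (a * z) ×ˢ Ici (b * z) := by
        ext q
        simp [hS, hz', mem_Ici, Prod.le_def]
      rw [hpre, indicator_of_mem hz, Measure.prod_prod,
        gammaMeasure_Ici _ (by positivity) _ (by positivity),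
        gammaMeasure_Ici _ (by positivity) _ (by positivity),
        ← ENNReal.ofReal_mul (tailF_nonneg (by positivity) (by positivity) _)]
    · have hz' : ¬ c < z := hz
      have hpre : Prod.mk z ⁻¹' S = ∅ := by
        ext q
        simp [hS, hz']
      rw [hpre, indicator_of_notMem hz]
      simp
  rw [hslice]
  -- Step 4: unfold the exponential density
  have hexp_unfold : expMeasure Ωp⁻¹ = volume.withDensity (gammaPDF 1 Ωp⁻¹) := rfl
  have hgmeas : Measurable fun z : ℝ => ENNReal.ofReal
      (tailF Ωn⁻¹ (mn + 1) (a * z) * tailF Ωf⁻¹ (mf + 1) (b * z)) := by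
    apply Measurable.ennreal_ofReal
    exact (((tailF_continuous _ _).comp (continuous_const.mul continuous_id)).mul
      ((tailF_continuous _ _).comp (continuous_const.mul continuous_id))).measurable
  have hpdfmeas : Measurable (gammaPDF 1 Ωp⁻¹) :=
    (measurable_gammaPDFReal 1 Ωp⁻¹).ennreal_ofReal
  rw [hexp_unfold, setLIntegral_withDensity_eq_setLIntegral_mul _ hpdfmeas hgmeas
    measurableSet_Ioi]
  have hH : (∫⁻ z in Ioi c, (gammaPDF 1 Ωp⁻¹ * fun z => ENNReal.ofReal
        (tailF Ωn⁻¹ (mn + 1) (a * z) * tailF Ωf⁻¹ (mf + 1) (b * z))) z)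
      = ∫⁻ z in Ioi c, ENNReal.ofReal (Ωp⁻¹ * Real.exp (-(Ωp⁻¹ * z))
          * (tailF Ωn⁻¹ (mn + 1) (a * z) * tailF Ωf⁻¹ (mf + 1) (b * z))) := by
    refine setLIntegral_congr_fun measurableSet_Ioi (fun z hz => ?_)
    have hz0 : 0 < z := lt_trans hcpos hz
    simp only [Pi.mul_apply]
    rw [gammaPDF_of_nonneg hz0.le,
      ← ENNReal.ofReal_mul (by positivity)]
    congr 1
    rw [rpow_one, Real.Gamma_one, sub_self, rpow_zero]
    ring
  rw [hH]
  -- Step 5: pointwise expansion into a double sum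
  have hpt : ∀ z : ℝ, Ωp⁻¹ * Real.exp (-(Ωp⁻¹ * z))
        * (tailF Ωn⁻¹ (mn + 1) (a * z) * tailF Ωf⁻¹ (mf + 1) (b * z))
      = ∑ k ∈ Finset.range (mf + 1), ∑ l ∈ Finset.range (mn + 1),
          (Ωp⁻¹ * ((Ωn⁻¹ * a) ^ l / (Nat.factorial l)) * ((Ωf⁻¹ * b) ^ k / (Nat.factorial k)))
            * (z ^ (k + l) * Real.exp (-(β * z))) := by
    intro z
    have hexp3 : Real.exp (-(Ωp⁻¹ * z)) * (Real.exp (-(Ωn⁻¹ * (a * z)))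
        * Real.exp (-(Ωf⁻¹ * (b * z)))) = Real.exp (-(β * z)) := by
      rw [← Real.exp_add, ← Real.exp_add]
      congr 1
      rw [hβ, ha, hb]
      field_simp
      ring
    unfold PowX2Aux.tailF
    calc Ωp⁻¹ * Real.exp (-(Ωp⁻¹ * z))
          * ((Real.exp (-(Ωn⁻¹ * (a * z))) * ∑ j ∈ Finset.range (mn + 1),
              (Ωn⁻¹ * (a * z)) ^ j / (Nat.factorial j))
            * (Real.exp (-(Ωf⁻¹ * (b * z))) * ∑ j ∈ Finset.range (mf + 1),
              (Ωf⁻¹ * (b * z)) ^ j / (Nat.factorial j)))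
        = (Real.exp (-(Ωp⁻¹ * z)) * (Real.exp (-(Ωn⁻¹ * (a * z)))
            * Real.exp (-(Ωf⁻¹ * (b * z)))))
          * (Ωp⁻¹ * ((∑ j ∈ Finset.range (mf + 1), (Ωf⁻¹ * (b * z)) ^ j / (Nat.factorial j))
            * (∑ j ∈ Finset.range (mn + 1), (Ωn⁻¹ * (a * z)) ^ j / (Nat.factorial j)))) := by
          ring
      _ = Real.exp (-(β * z))
          * (Ωp⁻¹ * ∑ k ∈ Finset.range (mf + 1), ∑ l ∈ Finset.range (mn + 1),
              ((Ωf⁻¹ * (b * z)) ^ k / (Nat.factorial k))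
                * ((Ωn⁻¹ * (a * z)) ^ l / (Nat.factorial l))) := by
          rw [hexp3, Finset.sum_mul_sum]
      _ = _ := by
          simp only [Finset.mul_sum]
          refine Finset.sum_congr rfl fun k _ => ?_
          refine Finset.sum_congr rfl fun l _ => ?_
          ring
  -- Step 6: integrability and conversion to a Bochner integral
  have hatom : ∀ n : ℕ, IntegrableOn (fun z => z ^ n * Real.exp (-(β * z))) (Ioi c) volume :=
    fun n => integrable_pow_exp β hβpos n hcpos.le
  have hHnn : ∀ z ∈ Ioi c, 0 ≤ Ωp⁻¹ * Real.exp (-(Ωp⁻¹ * z))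
      * (tailF Ωn⁻¹ (mn + 1) (a * z) * tailF Ωf⁻¹ (mf + 1) (b * z)) := by
    intro z hz
    have hz0 : 0 < z := lt_trans hcpos hz
    have t1 := tailF_nonneg (x := a * z) (by positivity) (by positivity) (mn + 1) (l := Ωn⁻¹)
    have t2 := tailF_nonneg (x := b * z) (by positivity) (by positivity) (mf + 1) (l := Ωf⁻¹)
    positivity
  have hHint : IntegrableOn (fun z => Ωp⁻¹ * Real.exp (-(Ωp⁻¹ * z))
      * (tailF Ωn⁻¹ (mn + 1) (a * z) * tailF Ωf⁻¹ (mf + 1) (b * z))) (Ioi c) volume := by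
    have : (fun z => Ωp⁻¹ * Real.exp (-(Ωp⁻¹ * z))
        * (tailF Ωn⁻¹ (mn + 1) (a * z) * tailF Ωf⁻¹ (mf + 1) (b * z)))
      = fun z => ∑ k ∈ Finset.range (mf + 1), ∑ l ∈ Finset.range (mn + 1),
          (Ωp⁻¹ * ((Ωn⁻¹ * a) ^ l / (Nat.factorial l)) * ((Ωf⁻¹ * b) ^ k / (Nat.factorial k)))
            * (z ^ (k + l) * Real.exp (-(β * z))) := funext hpt
    rw [this]
    exact integrable_finset_sum _ fun k _ =>
      integrable_finset_sum _ fun l _ => (hatom (k + l)).const_mul _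
  rw [← ofReal_integral_eq_lintegral_ofReal hHint
    ((ae_restrict_iff' measurableSet_Ioi).mpr (ae_of_all _ hHnn)),
    ENNReal.toReal_ofReal (setIntegral_nonneg measurableSet_Ioi hHnn)]
  -- Step 7: compute the integral termwise
  rw [setIntegral_congr_fun measurableSet_Ioi (fun z _ => hpt z)]
  rw [integral_finset_sum _ (fun k _ =>
    integrable_finset_sum _ (fun l _ => (hatom (k + l)).const_mul _))]
  rw [Finset.mul_sum]
  refine Finset.sum_congr rfl fun k _ => ?_
  rw [integral_finset_sum _ (fun l _ => (hatom (k + l)).const_mul _), Finset.mul_sum]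
  refine Finset.sum_congr rfl fun l _ => ?_
  rw [integral_const_mul, integral_pow_exp β hβpos (k + l) c]
  have hfk : (Nat.factorial k : ℝ) ≠ 0 := Nat.cast_ne_zero.mpr (Nat.factorial_ne_zero k)
  have hfl : (Nat.factorial l : ℝ) ≠ 0 := Nat.cast_ne_zero.mpr (Nat.factorial_ne_zero l)
  have hβ0 : β ^ (k + l + 1) ≠ 0 := pow_ne_zero _ hβpos.ne'
  rw [ha, hb]
  field_simp
  try ring_nf
  try tauto
  have e1 : Ωn ^ l * Ωn⁻¹ ^ l = 1 := by rw [← mul_pow, mul_inv_cancel₀ hΩn.ne', one_pow]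
  have e2 : I ^ l * I⁻¹ ^ l = 1 := by rw [← mul_pow, mul_inv_cancel₀ hI.ne', one_pow]
  have e3 : I ^ k * I⁻¹ ^ k = 1 := by rw [← mul_pow, mul_inv_cancel₀ hI.ne', one_pow]
  have e4 : Ωf ^ k * Ωf⁻¹ ^ k = 1 := by rw [← mul_pow, mul_inv_cancel₀ hΩf.ne', one_pow]
  calc _ = ξn ^ l * ξf ^ k * (∫ t in Ioi (β * c), t ^ l * t ^ k * rexp (-t))
        * ((Ωn ^ l * Ωn⁻¹ ^ l) * (I ^ l * I⁻¹ ^ l) * (I ^ k * I⁻¹ ^ k) * (Ωf ^ k * Ωf⁻¹ ^ k)) := by ring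
    _ = _ := by rw [e1, e2, e3, e4]; ring
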